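/- Let p be a prime, n a positive integer, and 1 ≤ m ≤ n. A function f : 𝔽_p^n → 𝔽_p is m-resilient if and only if the polynomial z^{p^m} − 1 divides the associated polynomial F_π(z) in ℂ[z] for every permutation π of {1,...,n}. -/
import Mathlib


/-- `ω = exp(2π√-1/p)`, a primitive `p`-th root of unity in `ℂ`. -/
noncomputable def omegaC (p : ℕ) : ℂ := Complex.exp (2 * Real.pi * Complex.I / p)

/-- `ξ = exp(2π√-1/pⁿ)`, a primitive `pⁿ`-th root of unity in `ℂ`. -/
noncomputable def xiC (p n : ℕ) : ℂ := Complex.exp (2 * Real.pi * Complex.I / (p ^ n : ℕ))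

/-- The integer `k = Σ_{i=1}^n x_i p^{i-1}` whose `p`-adic digits are `x₁,…,xₙ`
(0-indexed here). -/
def idx {p n : ℕ} (x : Fin n → ZMod p) : ℕ := ∑ i : Fin n, (x i).val * p ^ (i : ℕ)

/-- The associated polynomial `F(z) = Σ_{k=0}^{pⁿ-1} ω^{f(k)} z^k
  = Σ_{x ∈ 𝔽ₚⁿ} ω^{f(x)} z^{idx x} ∈ ℂ[z]`. -/
noncomputable def assocPoly {p n : ℕ} [NeZero p] (f : (Fin n → ZMod p) → ZMod p) :
    Polynomial ℂ :=
  ∑ x : Fin n → ZMod p, Polynomial.monomial (idx x) (omegaC p ^ (f x).val)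

/-- Discrete Fourier transform over ℂ: `𝔉_f(j) = Σ_{k=0}^{pⁿ-1} ω^{f(k)} ξ^{-kj}`. -/
noncomputable def dft {p n : ℕ} [NeZero p] (f : (Fin n → ZMod p) → ZMod p) (j : ℕ) : ℂ :=
  ∑ x : Fin n → ZMod p, omegaC p ^ (f x).val * xiC p n ^ (-((idx x * j : ℕ) : ℤ))

/-- `f` is `m`-th order correlation-immune: for every `m`-subset `S` of the variable
indices, every assignment `a` of values on `S` and every `t`,
`p^m ⬝ #{x : f x = t ∧ x∣_S = a∣_S} = #{x : f x = t}`. -/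
def CorrImmune {p n : ℕ} [NeZero p] (f : (Fin n → ZMod p) → ZMod p) (m : ℕ) : Prop :=
  ∀ S : Finset (Fin n), S.card = m → ∀ a : Fin n → ZMod p, ∀ t : ZMod p,
    p ^ m * (Finset.univ.filter fun x : Fin n → ZMod p =>
        f x = t ∧ ∀ i ∈ S, x i = a i).card
      = (Finset.univ.filter fun x : Fin n → ZMod p => f x = t).card

/-- `f` is balanced: every output value is attained exactly `p^{n-1}` times. -/
def IsBalanced {p n : ℕ} [NeZero p] (f : (Fin n → ZMod p) → ZMod p) : Prop :=
  ∀ t : ZMod p,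
    (Finset.univ.filter fun x : Fin n → ZMod p => f x = t).card = p ^ (n - 1)

/-- `f` is `m`-resilient: `m`-th order correlation-immune and balanced. -/
def Resilient {p n : ℕ} [NeZero p] (f : (Fin n → ZMod p) → ZMod p) (m : ℕ) : Prop :=
  CorrImmune f m ∧ IsBalanced f


open Polynomial Finset

section Aux

lemma omega_prim (p : ℕ) [NeZero p] : IsPrimitiveRoot (omegaC p) p :=
  Complex.isPrimitiveRoot_exp p (NeZero.ne p)

/-! ### Digit lemmas -/

lemma low_eq_equiv {p n m : ℕ} [NeZero p] (hmn : m ≤ n) (x : Fin n → ZMod p) :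
    ∑ i : Fin m, (x (Fin.castLE hmn i)).val * p ^ (i : ℕ)
      = ((finFunctionFinEquiv (fun i : Fin m =>
          (⟨(x (Fin.castLE hmn i)).val, ZMod.val_lt _⟩ : Fin p))) : ℕ) := by
  rw [finFunctionFinEquiv_apply]

lemma low_lt {p n m : ℕ} [NeZero p] (hmn : m ≤ n) (x : Fin n → ZMod p) :
    ∑ i : Fin m, (x (Fin.castLE hmn i)).val * p ^ (i : ℕ) < p ^ m := by
  rw [low_eq_equiv hmn x]
  exact (finFunctionFinEquiv _).isLt

lemma low_inj {p n m : ℕ} [NeZero p] (hmn : m ≤ n) (x y : Fin n → ZMod p)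
    (h : ∑ i : Fin m, (x (Fin.castLE hmn i)).val * p ^ (i : ℕ)
       = ∑ i : Fin m, (y (Fin.castLE hmn i)).val * p ^ (i : ℕ)) :
    ∀ i : Fin m, x (Fin.castLE hmn i) = y (Fin.castLE hmn i) := by
  rw [low_eq_equiv hmn x, low_eq_equiv hmn y] at h
  have h2 := finFunctionFinEquiv.injective (Fin.val_injective h)
  intro i
  have := congrFun h2 i
  have hv : (x (Fin.castLE hmn i)).val = (y (Fin.castLE hmn i)).val := congrArg Fin.val this
  exact ZMod.val_injective p hv

lemma lowF_eq {p n m : ℕ} (hmn : m ≤ n) (x : Fin n → ZMod p) :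
    ∑ i ∈ univ.filter (fun i : Fin n => (i : ℕ) < m), (x i).val * p ^ (i : ℕ)
      = ∑ i : Fin m, (x (Fin.castLE hmn i)).val * p ^ (i : ℕ) := by
  refine Finset.sum_bij' (fun (i : Fin n) (hi : i ∈ univ.filter (fun i : Fin n => (i : ℕ) < m)) =>
      (⟨(i : ℕ), by simpa using hi⟩ : Fin m))
    (fun j _ => Fin.castLE hmn j) (fun a ha => mem_univ _) (fun j hj => by simp [j.isLt])
    (fun a ha => by simp) (fun j hj => by simp) (fun a ha => by simp)

lemma idx_mod {p n m : ℕ} [NeZero p] (hmn : m ≤ n) (x : Fin n → ZMod p) :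
    idx x % p ^ m = ∑ i : Fin m, (x (Fin.castLE hmn i)).val * p ^ (i : ℕ) := by
  have hsplit : idx x = (∑ i ∈ univ.filter (fun i : Fin n => (i : ℕ) < m), (x i).val * p ^ (i : ℕ))
      + ∑ i ∈ univ.filter (fun i : Fin n => ¬ (i : ℕ) < m), (x i).val * p ^ (i : ℕ) :=
    (Finset.sum_filter_add_sum_filter_not _ _ _).symm
  have hdvd : p ^ m ∣ ∑ i ∈ univ.filter (fun i : Fin n => ¬ (i : ℕ) < m),
      (x i).val * p ^ (i : ℕ) := by
    refine Finset.dvd_sum fun i hi => ?_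
    simp only [mem_filter, not_lt] at hi
    exact Dvd.dvd.mul_left (pow_dvd_pow p hi.2) _
  obtain ⟨k, hk⟩ := hdvd
  rw [hsplit, hk, lowF_eq hmn x, Nat.add_mul_mod_self_left, Nat.mod_eq_of_lt (low_lt hmn x)]

lemma idx_mod_eq_iff {p n m : ℕ} [NeZero p] (hmn : m ≤ n) (x y : Fin n → ZMod p) :
    idx x % p ^ m = idx y % p ^ m ↔ ∀ i : Fin n, (i : ℕ) < m → x i = y i := by
  rw [idx_mod hmn x, idx_mod hmn y]
  constructor
  · intro h i hi
    have := low_inj hmn x y h ⟨(i : ℕ), hi⟩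
    simpa [Fin.castLE, Fin.ext_iff] using this
  · intro h
    exact Finset.sum_congr rfl fun i _ => by rw [h (Fin.castLE hmn i) (by simpa using i.isLt)]

/-! ### Vanishing sums of roots of unity -/

lemma sum_zmod_eq_sum_range {p : ℕ} [NeZero p] {M : Type*} [AddCommMonoid M] (g : ZMod p → M) :
    ∑ t : ZMod p, g t = ∑ i ∈ range p, g (i : ZMod p) := by
  refine Finset.sum_bij' (fun (t : ZMod p) _ => t.val) (fun i _ => (i : ZMod p))
    (fun t _ => mem_range.mpr (ZMod.val_lt t)) (fun i _ => mem_univ _)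
    (fun t _ => by simp [ZMod.natCast_val, ZMod.cast_id]) ?_ ?_
  · intro i hi
    exact ZMod.val_cast_of_lt (mem_range.mp hi)
  · intro t _
    rw [ZMod.natCast_val, ZMod.cast_id]

lemma sum_omega_eq_zero_iff {p : ℕ} [hp : Fact p.Prime] (c : ZMod p → ℕ) :
    (∑ t : ZMod p, (c t : ℂ) * omegaC p ^ t.val) = 0 ↔ ∀ t t' : ZMod p, c t = c t' := by
  have hp1 : 1 < p := hp.out.one_lt
  have hprim := omega_prim p
  have hgeom : ∑ i ∈ range p, omegaC p ^ i = 0 := hprim.geom_sum_eq_zero hp1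
  constructor
  · intro h
    suffices hs : ∀ t : ZMod p, c t = c 0 by
      intro t t'; rw [hs t, hs t']
    rw [sum_zmod_eq_sum_range] at h
    have hval : ∀ i ∈ range p, ((i : ZMod p)).val = i := fun i hi =>
      ZMod.val_cast_of_lt (mem_range.mp hi)
    have h' : ∑ i ∈ range p, ((c (i : ZMod p)) : ℂ) * omegaC p ^ i = 0 := by
      rw [← h]; exact Finset.sum_congr rfl fun i hi => by rw [hval i hi]
    set Q : ℚ[X] := ∑ i ∈ range p, C ((c (i : ZMod p) : ℚ) - (c 0 : ℚ)) * X ^ i with hQ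
    have hcoeff : ∀ j, Q.coeff j
        = if j ∈ range p then ((c (j : ZMod p) : ℚ) - (c 0 : ℚ)) else 0 := by
      intro j
      rw [hQ, finset_sum_coeff]
      simp only [coeff_C_mul, coeff_X_pow]
      simp only [mul_ite, mul_one, mul_zero, eq_comm (a := j)]
      rw [Finset.sum_ite_eq' (range p) j]
    have haeval : aeval (omegaC p) Q = 0 := by
      rw [hQ]
      simp only [map_sum, map_mul, map_pow, aeval_C, aeval_X]
      have : ∀ i ∈ range p, ((algebraMap ℚ ℂ) ((c (i : ZMod p) : ℚ) - (c 0 : ℚ))) * omegaC p ^ i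
          = (c (i : ZMod p) : ℂ) * omegaC p ^ i - (c 0 : ℂ) * omegaC p ^ i := by
        intro i _
        push_cast
        ring
      rw [Finset.sum_congr rfl this, Finset.sum_sub_distrib, h', ← Finset.mul_sum, hgeom]
      ring
    have hmin : cyclotomic p ℚ = minpoly ℚ (omegaC p) :=
      cyclotomic_eq_minpoly_rat hprim hp.out.pos
    have hdvd : cyclotomic p ℚ ∣ Q := hmin ▸ minpoly.dvd ℚ _ haeval
    obtain ⟨q, hq⟩ := hdvd
    have hQ0 : Q = 0 := by
      by_cases hq0 : q = 0
      · rw [hq, hq0, mul_zero]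
      have hcyc0 : cyclotomic p ℚ ≠ 0 := cyclotomic_ne_zero p ℚ
      have hdegQ : Q.natDegree ≤ p - 1 := by
        refine natDegree_sum_le_of_forall_le _ _ fun i hi => ?_
        refine (natDegree_C_mul_le _ _).trans ?_
        simp only [natDegree_X_pow]
        have := mem_range.mp hi
        omega
      have hdegc : (cyclotomic p ℚ).natDegree = p - 1 := by
        rw [natDegree_cyclotomic, Nat.totient_prime hp.out]
      have hdegq : q.natDegree = 0 := by
        have := natDegree_mul hcyc0 hq0
        rw [← hq, hdegc] at this
        omega
      obtain ⟨a, ha⟩ := natDegree_eq_zero.mp hdegq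
      have ha0 : a = 0 := by
        have h0 : Q.coeff 0 = a * (cyclotomic p ℚ).coeff 0 := by
          rw [hq, ← ha, mul_comm, coeff_C_mul]
        have hc0 : (cyclotomic p ℚ).coeff 0 = 1 := by
          rw [cyclotomic_prime ℚ p, finset_sum_coeff]
          simp only [coeff_X_pow]
          rw [Finset.sum_eq_single 0] <;> simp [hp.out.pos]
          intro i _ h; simp [Ne.symm h]
        have hcq0 : Q.coeff 0 = 0 := by
          rw [hcoeff 0]
          simp [hp.out.pos]
        rw [hcq0, hc0, mul_one] at h0
        exact h0.symm
      rw [hq, ← ha, ha0, map_zero, mul_zero]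
    intro t
    have := hcoeff t.val
    rw [hQ0, coeff_zero] at this
    have ht : t.val ∈ range p := mem_range.mpr (ZMod.val_lt t)
    rw [if_pos ht] at this
    have : (c ((t.val : ℕ) : ZMod p) : ℚ) = (c 0 : ℚ) := by linarith [this.symm]
    rw [ZMod.natCast_val, ZMod.cast_id] at this
    exact_mod_cast this
  · intro h
    have hall : ∀ t : ZMod p, c t = c 0 := fun t => h t 0
    calc ∑ t : ZMod p, (c t : ℂ) * omegaC p ^ t.val
        = ∑ t : ZMod p, (c 0 : ℂ) * omegaC p ^ t.val :=
          Finset.sum_congr rfl fun t _ => by rw [hall t]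
      _ = (c 0 : ℂ) * ∑ t : ZMod p, omegaC p ^ t.val := by rw [Finset.mul_sum]
      _ = (c 0 : ℂ) * ∑ i ∈ range p, omegaC p ^ i := by
          rw [sum_zmod_eq_sum_range (fun t : ZMod p => omegaC p ^ t.val)]
          congr 1
          exact Finset.sum_congr rfl fun i hi => by rw [ZMod.val_cast_of_lt (mem_range.mp hi)]
      _ = 0 := by rw [hgeom, mul_zero]

/-! ### Counting -/

lemma card_ext {p n : ℕ} [NeZero p] (S : Finset (Fin n)) (w : Fin n → ZMod p) :
    (univ.filter fun z : Fin n → ZMod p => ∀ i ∈ S, z i = w i).card = p ^ (n - S.card) := by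
  classical
  rw [← Fintype.card_subtype]
  have e : {z : Fin n → ZMod p // ∀ i ∈ S, z i = w i} ≃ ({i : Fin n // i ∉ S} → ZMod p) :=
    { toFun := fun z i => z.1 i.1
      invFun := fun g => ⟨fun i => if h : i ∈ S then w i else g ⟨i, h⟩, fun i hi => by simp [hi]⟩
      left_inv := fun z => by
        ext i
        by_cases h : i ∈ S <;> simp [h, z.2 i]
      right_inv := fun g => by
        ext i
        simp [i.2] }
  rw [Fintype.card_congr e, Fintype.card_fun, ZMod.card]
  congr 1
  rw [Fintype.card_subtype_compl, Fintype.card_coe, Fintype.card_fin]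

/-- The count `#{y : f y = t ∧ y∣_S = a∣_S}`. -/
def rcnt {p n : ℕ} [NeZero p] (f : (Fin n → ZMod p) → ZMod p) (S : Finset (Fin n))
    (a : Fin n → ZMod p) (t : ZMod p) : ℕ :=
  (Finset.univ.filter fun y : Fin n → ZMod p => f y = t ∧ ∀ i ∈ S, y i = a i).card

lemma sum_grouped {p n : ℕ} [NeZero p] (f : (Fin n → ZMod p) → ZMod p)
    (S : Finset (Fin n)) (a : Fin n → ZMod p) :
    (∑ y ∈ univ.filter (fun y : Fin n → ZMod p => ∀ i ∈ S, y i = a i),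
      omegaC p ^ (f y).val)
      = ∑ t : ZMod p, (rcnt f S a t : ℂ) * omegaC p ^ t.val := by
  classical
  rw [← Finset.sum_fiberwise_of_maps_to (g := f)
    (fun y _ => mem_univ (f y)) (fun y => omegaC p ^ (f y).val)]
  refine Finset.sum_congr rfl fun t _ => ?_
  have h2 : ((univ.filter (fun y : Fin n → ZMod p => ∀ i ∈ S, y i = a i)).filter
        (fun y => f y = t))
      = univ.filter (fun y : Fin n → ZMod p => f y = t ∧ ∀ i ∈ S, y i = a i) := by
    rw [Finset.filter_filter]
    exact Finset.filter_congr fun y _ => by tauto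
  rw [h2]
  have h1 : ∀ y ∈ univ.filter (fun y : Fin n → ZMod p => f y = t ∧ ∀ i ∈ S, y i = a i),
      omegaC p ^ (f y).val = omegaC p ^ t.val := fun y hy => by
    rw [(mem_filter.mp hy).2.1]
  rw [Finset.sum_congr rfl h1, Finset.sum_const, nsmul_eq_mul, rcnt]

lemma card_filter_lt {n m : ℕ} (hmn : m ≤ n) :
    (univ.filter fun i : Fin n => (i : ℕ) < m).card = m := by
  rw [← Fintype.card_subtype]
  have e : {i : Fin n // (i : ℕ) < m} ≃ Fin m :=
    { toFun := fun i => ⟨(i : ℕ), i.2⟩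
      invFun := fun j => ⟨Fin.castLE hmn j, by simpa using j.isLt⟩
      left_inv := fun i => by ext; simp [Fin.castLE]
      right_inv := fun j => by ext; simp [Fin.castLE] }
  rw [Fintype.card_congr e, Fintype.card_fin]

/-! ### Divisibility criterion -/

lemma dvd_iff_sums {p n N : ℕ} [NeZero p] (hN : 0 < N) (g : (Fin n → ZMod p) → ZMod p) :
    ((X ^ N - 1 : ℂ[X]) ∣ assocPoly g) ↔
      ∀ r : ℕ, (∑ x ∈ univ.filter (fun x : Fin n → ZMod p => idx x % N = r),
        omegaC p ^ (g x).val) = 0 := by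
  classical
  set G : ℂ[X] := ∑ x : Fin n → ZMod p, monomial (idx x % N) (omegaC p ^ (g x).val) with hG
  have hdvdFG : (X ^ N - 1 : ℂ[X]) ∣ assocPoly g - G := by
    rw [assocPoly, hG, ← Finset.sum_sub_distrib]
    refine Finset.dvd_sum fun x _ => ?_
    set k := idx x
    have h1 : (monomial k (omegaC p ^ (g x).val) : ℂ[X])
        = C (omegaC p ^ (g x).val) * X ^ k := by rw [C_mul_X_pow_eq_monomial]
    have h2 : (monomial (k % N) (omegaC p ^ (g x).val) : ℂ[X])
        = C (omegaC p ^ (g x).val) * X ^ (k % N) := by rw [C_mul_X_pow_eq_monomial]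
    rw [h1, h2, ← mul_sub]
    refine Dvd.dvd.mul_left ?_ _
    have hXk : (X : ℂ[X]) ^ k = X ^ (k % N) * (X ^ N) ^ (k / N) := by
      rw [← pow_mul, ← pow_add]
      congr 1
      have := Nat.div_add_mod k N
      omega
    rw [hXk]
    have hd : (X ^ N - 1 : ℂ[X]) ∣ (X ^ N) ^ (k / N) - 1 := by
      simpa using sub_dvd_pow_sub_pow (X ^ N : ℂ[X]) 1 (k / N)
    have heq : (X : ℂ[X]) ^ (k % N) * (X ^ N) ^ (k / N) - X ^ (k % N)
        = ((X ^ N) ^ (k / N) - 1) * X ^ (k % N) := by ring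
    rw [heq]
    exact hd.mul_right _
  have hGcoeff : ∀ r : ℕ, G.coeff r
      = ∑ x ∈ univ.filter (fun x : Fin n → ZMod p => idx x % N = r),
        omegaC p ^ (g x).val := by
    intro r
    rw [hG, finset_sum_coeff, Finset.sum_filter]
    refine Finset.sum_congr rfl fun x _ => ?_
    rw [coeff_monomial]
  constructor
  · intro h r
    rw [← hGcoeff]
    have hdvdG : (X ^ N - 1 : ℂ[X]) ∣ G := by
      have hGe : G = assocPoly g - (assocPoly g - G) := by ring
      rw [hGe]
      exact dvd_sub h hdvdFG
    have hGdeg : G.degree < (N : WithBot ℕ) := by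
      rw [hG]
      refine lt_of_le_of_lt (degree_sum_le _ _) ?_
      rw [Finset.sup_lt_iff (by exact_mod_cast WithBot.bot_lt_coe N)]
      intro x _
      refine lt_of_le_of_lt (degree_monomial_le _ _) ?_
      exact_mod_cast Nat.mod_lt _ hN
    have hG0 : G = 0 := by
      by_contra hne
      obtain ⟨q, hq⟩ := hdvdG
      have hq0 : q ≠ 0 := fun h0 => hne (by rw [hq, h0, mul_zero])
      have hX : (X ^ N - 1 : ℂ[X]) = X ^ N - C 1 := by rw [map_one]
      have hdeg1 : (X ^ N - 1 : ℂ[X]).degree = N := by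
        rw [hX]; exact degree_X_pow_sub_C hN 1
      have hdegG : G.degree = (N : WithBot ℕ) + q.degree := by
        rw [hq, degree_mul, hdeg1]
      rw [hdegG] at hGdeg
      have hqd : (0 : WithBot ℕ) ≤ q.degree := zero_le_degree_iff.mpr hq0
      have : (N : WithBot ℕ) ≤ (N : WithBot ℕ) + q.degree := le_add_of_nonneg_right hqd
      exact absurd (lt_of_le_of_lt this hGdeg) (lt_irrefl _)
    rw [hG0, coeff_zero]
  · intro h
    have hG0 : G = 0 := by
      ext r
      rw [hGcoeff r, coeff_zero, h r]
    rw [hG0, sub_zero] at hdvdFG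
    exact hdvdFG

lemma dvd_iff_classes {p n m : ℕ} [NeZero p] (hp1 : 1 ≤ p) (hmn : m ≤ n)
    (g : (Fin n → ZMod p) → ZMod p) :
    ((X ^ (p ^ m) - 1 : ℂ[X]) ∣ assocPoly g) ↔
      ∀ a : Fin n → ZMod p,
        (∑ x ∈ univ.filter (fun x : Fin n → ZMod p => ∀ i : Fin n, (i : ℕ) < m → x i = a i),
          omegaC p ^ (g x).val) = 0 := by
  classical
  rw [dvd_iff_sums (pow_pos hp1 m) g]
  constructor
  · intro h a
    have := h (idx a % p ^ m)
    rwa [Finset.filter_congr (fun x _ => idx_mod_eq_iff hmn x a)] at this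
  · intro h r
    rcases Finset.eq_empty_or_nonempty
      (univ.filter (fun x : Fin n → ZMod p => idx x % p ^ m = r)) with he | ⟨x₀, hx₀⟩
    · rw [he, Finset.sum_empty]
    · have hr : idx x₀ % p ^ m = r := (mem_filter.mp hx₀).2
      rw [← hr, Finset.filter_congr (fun x _ => idx_mod_eq_iff hmn x x₀)]
      exact h x₀

end Aux


lemma sum_reindex {p n m : ℕ} [NeZero p] (f : (Fin n → ZMod p) → ZMod p)
    (π : Equiv.Perm (Fin n)) (a' : Fin n → ZMod p) :
    (∑ x ∈ univ.filter (fun x : Fin n → ZMod p => ∀ i : Fin n, (i : ℕ) < m → x i = a' i),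
      omegaC p ^ (f (x ∘ π)).val)
    = ∑ y ∈ univ.filter (fun y : Fin n → ZMod p =>
        ∀ i : Fin n, (i : ℕ) < m → y (π.symm i) = a' i),
      omegaC p ^ (f y).val := by
  refine Finset.sum_bij' (fun x _ => x ∘ ⇑π) (fun y _ => y ∘ ⇑π.symm) ?_ ?_ ?_ ?_ ?_
  · intro x hx
    simp only [mem_filter, mem_univ, true_and] at hx ⊢
    intro i hi
    simpa using hx i hi
  · intro y hy
    simp only [mem_filter, mem_univ, true_and] at hy ⊢
    intro i hi
    simpa using hy i hi
  · intro x _; funext i; simp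
  · intro y _; funext i; simp
  · intro x _; rfl

lemma exists_perm {n m : ℕ} {S : Finset (Fin n)} (hS : S.card = m) (hmn : m ≤ n) :
    ∃ σ : Equiv.Perm (Fin n), ∀ i : Fin n, ((i : ℕ) < m ↔ σ i ∈ S) := by
  classical
  have hc : Fintype.card {i : Fin n // (i : ℕ) < m} = Fintype.card {i : Fin n // i ∈ S} := by
    rw [Fintype.card_subtype, card_filter_lt hmn, Fintype.card_coe, hS]
  have e := Fintype.equivOfCardEq hc
  refine ⟨Equiv.extendSubtype e, fun i => ?_⟩
  constructor
  · intro hi; exact Equiv.extendSubtype_mem e i hi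
  · intro hi; by_contra h; exact (Equiv.extendSubtype_not_mem e i h) hi

lemma sum_rcnt_t {p n : ℕ} [NeZero p] (f : (Fin n → ZMod p) → ZMod p)
    (S : Finset (Fin n)) (a : Fin n → ZMod p) :
    ∑ t : ZMod p, rcnt f S a t = p ^ (n - S.card) := by
  classical
  rw [← card_ext S a]
  rw [Finset.card_eq_sum_card_fiberwise
    (f := f) (t := (univ : Finset (ZMod p))) (fun y _ => mem_univ (f y))]
  refine Finset.sum_congr rfl fun t _ => ?_
  rw [Finset.filter_filter, rcnt]
  congr 1
  exact Finset.filter_congr fun y _ => by tauto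

lemma sum_rcnt_a {p n : ℕ} [NeZero p] (f : (Fin n → ZMod p) → ZMod p)
    (S : Finset (Fin n)) (t : ZMod p) :
    ∑ a : Fin n → ZMod p, rcnt f S a t
      = (univ.filter fun y : Fin n → ZMod p => f y = t).card * p ^ (n - S.card) := by
  classical
  have h1 : ∀ a : Fin n → ZMod p, rcnt f S a t
      = ∑ y : Fin n → ZMod p, if f y = t ∧ ∀ i ∈ S, y i = a i then 1 else 0 := fun a =>
    Finset.card_filter _ _
  rw [Finset.sum_congr rfl (fun a _ => h1 a), Finset.sum_comm]
  have h2 : ∀ y : Fin n → ZMod p,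
      (∑ a : Fin n → ZMod p, if f y = t ∧ ∀ i ∈ S, y i = a i then 1 else 0)
      = if f y = t then p ^ (n - S.card) else 0 := by
    intro y
    by_cases hf : f y = t
    · simp only [hf, true_and, if_true]
      have h3 : (∑ a : Fin n → ZMod p, if ∀ i ∈ S, y i = a i then 1 else 0)
          = (univ.filter fun a : Fin n → ZMod p => ∀ i ∈ S, a i = y i).card := by
        rw [Finset.card_filter]
        refine Finset.sum_congr rfl fun a _ => ?_
        exact if_congr (by constructor <;> intro h i hi <;> exact (h i hi).symm) rfl rfl
      rw [h3, card_ext]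
    · simp [hf]
  rw [Finset.sum_congr rfl fun y _ => h2 y, Finset.sum_ite, Finset.sum_const,
    Finset.sum_const_zero, add_zero, smul_eq_mul]


/-- A function `f : 𝔽ₚⁿ → 𝔽ₚ` is `m`-resilient iff `z^{p^m} - 1` divides the
associated polynomial `F_π(z)` in `ℂ[z]` for every permutation `π`. -/
theorem resilient_iff_pow_sub_one_dvd_assocPoly
    (p n m : ℕ) [Fact p.Prime] (hn : 0 < n) (hm : 1 ≤ m) (hmn : m ≤ n)
    (f : (Fin n → ZMod p) → ZMod p) :
    Resilient f m ↔ ∀ π : Equiv.Perm (Fin n),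
      (Polynomial.X ^ (p ^ m) - 1 : Polynomial ℂ) ∣ assocPoly (fun x => f (x ∘ π)) := by
  classical
  have hp : p.Prime := Fact.out
  have hp1 : 1 ≤ p := hp.one_lt.le
  have key_iff : (∀ π : Equiv.Perm (Fin n),
        (X ^ (p ^ m) - 1 : ℂ[X]) ∣ assocPoly (fun x => f (x ∘ π)))
      ↔ ∀ S : Finset (Fin n), S.card = m → ∀ a : Fin n → ZMod p, ∀ t t' : ZMod p,
          rcnt f S a t = rcnt f S a t' := by
    constructor
    · intro h S hS a t t'
      obtain ⟨σ, hσ⟩ := exists_perm hS hmn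
      have hd := (dvd_iff_classes hp1 hmn (fun x => f (x ∘ ⇑σ.symm))).mp (h σ.symm)
      have h0 := hd (fun i => a (σ i))
      rw [sum_reindex] at h0
      have hfe : (univ.filter fun y : Fin n → ZMod p =>
            ∀ i : Fin n, (i : ℕ) < m → y (σ.symm.symm i) = a (σ i))
          = univ.filter fun y : Fin n → ZMod p => ∀ s ∈ S, y s = a s := by
        refine Finset.filter_congr fun y _ => ?_
        simp only [Equiv.symm_symm]
        constructor
        · intro hy s hs
          have hi : ((σ.symm s : Fin n) : ℕ) < m := (hσ (σ.symm s)).mpr (by simpa using hs)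
          simpa using hy (σ.symm s) hi
        · intro hy i hi
          exact hy (σ i) ((hσ i).mp hi)
      rw [hfe, sum_grouped] at h0
      exact ((sum_omega_eq_zero_iff _).mp h0) t t'
    · intro key π
      rw [dvd_iff_classes hp1 hmn]
      intro a'
      rw [sum_reindex]
      set σ := π.symm with hσdef
      set S := (univ.filter fun i : Fin n => (i : ℕ) < m).image σ with hSdef
      have hScard : S.card = m := by
        rw [hSdef, Finset.card_image_of_injective _ σ.injective, card_filter_lt hmn]
      have hP : ∀ i : Fin n, ((i : ℕ) < m ↔ σ i ∈ S) := by
        intro i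
        constructor
        · intro hi; exact Finset.mem_image_of_mem σ (by simp [hi])
        · intro hi
          obtain ⟨j, hj, hji⟩ := Finset.mem_image.mp hi
          have hji' : j = i := σ.injective hji
          subst hji'
          simpa using hj
      have hfe : (univ.filter fun y : Fin n → ZMod p =>
            ∀ i : Fin n, (i : ℕ) < m → y (σ i) = a' i)
          = univ.filter fun y : Fin n → ZMod p => ∀ s ∈ S, y s = (fun s => a' (σ.symm s)) s := by
        refine Finset.filter_congr fun y _ => ?_
        constructor
        · intro hy s hs
          obtain ⟨j, hj, hji⟩ := Finset.mem_image.mp hs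
          rw [← hji]
          simp only [Equiv.symm_apply_apply]
          exact hy j (by simpa using hj)
        · intro hy i hi
          have := hy (σ i) ((hP i).mp hi)
          simpa using this
      rw [hfe, sum_grouped]
      exact (sum_omega_eq_zero_iff _).mpr (key S hScard _)
  rw [key_iff]
  constructor
  · rintro ⟨hCI, hB⟩ S hS a t t'
    have h1 := hCI S hS a t
    have h2 := hCI S hS a t'
    rw [hB t] at h1
    rw [hB t'] at h2
    have h3 : p ^ m * rcnt f S a t = p ^ m * rcnt f S a t' := by
      rw [rcnt, rcnt, h1, h2]
    exact Nat.eq_of_mul_eq_mul_left (pow_pos hp.pos m) h3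
  · intro key
    have hpcnt : ∀ S : Finset (Fin n), S.card = m → ∀ a : Fin n → ZMod p, ∀ t : ZMod p,
        p * rcnt f S a t = p ^ (n - m) := by
      intro S hS a t
      have hsum : ∑ t' : ZMod p, rcnt f S a t' = p ^ (n - m) := by rw [sum_rcnt_t, hS]
      calc p * rcnt f S a t = ∑ _t' : ZMod p, rcnt f S a t := by
            rw [Finset.sum_const, card_univ, ZMod.card, smul_eq_mul]
        _ = ∑ t' : ZMod p, rcnt f S a t' :=
            Finset.sum_congr rfl fun t' _ => key S hS a t t'
        _ = p ^ (n - m) := hsum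
    set S₀ := (univ.filter fun i : Fin n => (i : ℕ) < m) with hS₀
    have hS₀card : S₀.card = m := card_filter_lt hmn
    have hBal : IsBalanced f := by
      intro t
      have hsa := sum_rcnt_a f S₀ t
      rw [hS₀card] at hsa
      have h3 : p * ((univ.filter fun y : Fin n → ZMod p => f y = t).card * p ^ (n - m))
          = p ^ n * p ^ (n - m) := by
        rw [← hsa, Finset.mul_sum]
        rw [Finset.sum_congr rfl fun a _ => hpcnt S₀ hS₀card a t, Finset.sum_const,
          smul_eq_mul, card_univ, Fintype.card_fun, ZMod.card, Fintype.card_fin]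
      rw [← mul_assoc] at h3
      have h4 : p * (univ.filter fun y : Fin n → ZMod p => f y = t).card = p ^ n :=
        Nat.eq_of_mul_eq_mul_right (pow_pos hp.pos _) h3
      have h5 : p ^ n = p * p ^ (n - 1) := by
        rw [← pow_succ']
        congr 1
        omega
      rw [h5] at h4
      exact Nat.eq_of_mul_eq_mul_left hp.pos h4
    refine ⟨?_, hBal⟩
    intro S hS a t
    have h5 := hpcnt S hS a t
    have h6 := hBal t
    show p ^ m * rcnt f S a t = _
    have hm1 : p ^ m = p ^ (m - 1) * p := by
      rw [← pow_succ]
      congr 1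
      omega
    rw [hm1, mul_assoc, h5, ← pow_add, h6]
    congr 1
    omega
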